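/- arXiv:1809.04410 — 5 statements merged into one kernel-verified Lean document; each statement's English description precedes it below -/
import Mathlib

section
/- Assume γ = 0, ξ = 0, α + ε + μ ≠ 0 and δ + σ + μ ≠ 0. Then a point of the form (x₁, 0, x₃) satisfies F(x₁, 0, x₃) = 0 if and only if x₃ = 0 and x₁ = (ε+μ)/(α+ε+μ). In other words, the addiction-free equilibrium is the unique equilibrium of the model with no addicted individuals. -/
open Matrix

/-- The prescription opioid epidemic vector field `F : ℝ³ → ℝ³`, where
`z = 1 - x₁ - x₂ - x₃`. -/
def opioidField (α β ξ ε δ μ μs γ ζ ν σ : ℝ) (x : Fin 3 → ℝ) : Fin 3 → ℝ :=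
  ![-α * x 0 - β * (1 - ξ) * x 0 * x 1 - β * ξ * x 0 * (1 - x 0 - x 1 - x 2)
      + (ε + μ) * (1 - x 0 - x 1 - x 2) + (δ + μ) * x 2 + μs * x 1,
    γ * (1 - x 0 - x 1 - x 2) + σ * x 2 + β * (1 - ξ) * x 0 * x 1
      + β * ξ * x 0 * (1 - x 0 - x 1 - x 2) + ν * x 2 * x 1 - (ζ + μs) * x 1,
    ζ * x 1 - μ * x 2 * x 1 - (δ + σ + μ) * x 2]

/-- if `γ = 0`, `ξ = 0`, `α + ε + μ ≠ 0` and `δ + σ + μ ≠ 0`, then a point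
`(x₁, 0, x₃)` is an equilibrium of the model iff `x₃ = 0` and `x₁ = (ε+μ)/(α+ε+μ)`;
i.e. the addiction-free equilibrium is the unique equilibrium with no addicted individuals. -/
theorem addiction_free_equilibrium_unique (α β ξ ε δ μ μs γ ζ ν σ : ℝ)
    (hγ : γ = 0) (hξ : ξ = 0) (h : α + ε + μ ≠ 0) (h' : δ + σ + μ ≠ 0)
    (x₁ x₃ : ℝ) :
    opioidField α β ξ ε δ μ μs γ ζ ν σ ![x₁, 0, x₃] = 0 ↔
      x₃ = 0 ∧ x₁ = (ε + μ) / (α + ε + μ) := by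
  subst hγ hξ
  constructor
  · intro hF
    have h0 := congrFun hF 0
    have h2 := congrFun hF 2
    simp [opioidField] at h0 h2
    have hx3 : x₃ = 0 := by
      tauto
    refine ⟨hx3, ?_⟩
    subst hx3
    field_simp
    linarith
  · rintro ⟨hx3, hx1⟩
    subst hx3 hx1
    funext i
    fin_cases i <;>
      simp [opioidField] <;> field_simp <;> ring
end

section
/- Assume γ = 0, ξ = 0 and α + ε + μ ≠ 0. Then the map F : ℝ³ → ℝ³ is differentiable at the addiction-free equilibrium x* = ((ε+μ)/(α+ε+μ), 0, 0), and its Jacobian matrix at x* equals the 3×3 matrix with rows ( -(α+ε+μ), -β(ε+μ)/(α+ε+μ) - (ε+μ) + μ*, δ - ε ), ( 0, β(ε+μ)/(α+ε+μ) - (ζ+μ*), σ ), ( 0, ζ, -(δ+σ+μ) ). In particular, the entries (2,1) and (3,1) of the Jacobian vanish. -/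
open Matrix

noncomputable abbrev opioidProj (i : Fin 3) : (Fin 3 → ℝ) →L[ℝ] ℝ := ContinuousLinearMap.proj i

/-- The Jacobian matrix of the opioid model at the addiction-free equilibrium
(for `γ = ξ = 0`). -/
noncomputable def opioidJacobian (α β ε δ μ μs ζ σ : ℝ) : Matrix (Fin 3) (Fin 3) ℝ :=
  !![-(α + ε + μ), -(β * (ε + μ) / (α + ε + μ)) - (ε + μ) + μs, δ - ε;
     0, β * (ε + μ) / (α + ε + μ) - (ζ + μs), σ;
     0, ζ, -(δ + σ + μ)]

set_option maxHeartbeats 1000000 in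
/-- for `γ = 0`, `ξ = 0`, `α + ε + μ ≠ 0`, the map `F` is differentiable at
the addiction-free equilibrium `x* = ((ε+μ)/(α+ε+μ), 0, 0)` with Jacobian matrix
`opioidJacobian`; in particular the `(2,1)` and `(3,1)` entries of the Jacobian vanish. -/
theorem opioid_jacobian_at_addiction_free (α β ξ ε δ μ μs γ ζ ν σ : ℝ)
    (hγ : γ = 0) (hξ : ξ = 0) (h : α + ε + μ ≠ 0) :
    HasFDerivAt (opioidField α β ξ ε δ μ μs γ ζ ν σ)
      (LinearMap.toContinuousLinearMap
        (Matrix.toLin' (opioidJacobian α β ε δ μ μs ζ σ)))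
      ![(ε + μ) / (α + ε + μ), 0, 0] ∧
    opioidJacobian α β ε δ μ μs ζ σ 1 0 = 0 ∧
    opioidJacobian α β ε δ μ μs ζ σ 2 0 = 0 := by
  subst hγ hξ
  refine ⟨?_, by norm_num [opioidJacobian, Matrix.vecHead, Matrix.vecTail], by rfl⟩
  set p : Fin 3 → ℝ := ![(ε + μ) / (α + ε + μ), 0, 0] with hp
  have hx0 : HasFDerivAt (fun x : Fin 3 → ℝ => x 0) (opioidProj 0) p :=
    by exact (opioidProj 0).hasFDerivAt (x := p)
  have hx1 : HasFDerivAt (fun x : Fin 3 → ℝ => x 1) (opioidProj 1) p :=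
    by exact (opioidProj 1).hasFDerivAt (x := p)
  have hx2 : HasFDerivAt (fun x : Fin 3 → ℝ => x 2) (opioidProj 2) p :=
    by exact (opioidProj 2).hasFDerivAt (x := p)
  have hz := (((hasFDerivAt_const (1:ℝ) p).sub hx0).sub hx1).sub hx2
  have h0 := (((((hx0.const_mul (-α)).sub ((hx0.const_mul (β * (1 - (0:ℝ)))).mul hx1)).sub
      ((hx0.const_mul (β * (0:ℝ))).mul hz)).add (hz.const_mul (ε + μ))).add
      (hx2.const_mul (δ + μ))).add (hx1.const_mul μs)
  have h1 := (((((hz.const_mul (0:ℝ)).add (hx2.const_mul σ)).add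
      ((hx0.const_mul (β * (1 - (0:ℝ)))).mul hx1)).add ((hx0.const_mul (β * (0:ℝ))).mul hz)).add
      ((hx2.const_mul ν).mul hx1)).sub (hx1.const_mul (ζ + μs))
  have h2 := ((hx1.const_mul ζ).sub ((hx2.const_mul μ).mul hx1)).sub (hx2.const_mul (δ + σ + μ))
  have key0 : (ContinuousLinearMap.proj (0 : Fin 3)).comp (LinearMap.toContinuousLinearMap
      (Matrix.toLin' (opioidJacobian α β ε δ μ μs ζ σ))) =
      -α • opioidProj 0 - ((β * (1 - 0) * p 0) • opioidProj 1 + p 1 • (β * (1 - 0)) • opioidProj 0) -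
            ((β * 0 * p 0) • (0 - opioidProj 0 - opioidProj 1 - opioidProj 2) +
              (1 - p 0 - p 1 - p 2) • (β * 0) • opioidProj 0) +
          (ε + μ) • (0 - opioidProj 0 - opioidProj 1 - opioidProj 2) +
        (δ + μ) • opioidProj 2 +
      μs • opioidProj 1 := by
    ext v
    simp [opioidJacobian, Matrix.toLin'_apply, Matrix.mulVec, dotProduct,
      Fin.sum_univ_three, hp, Matrix.vecHead, Matrix.vecTail]
    field_simp
    ring
  have key1 : (ContinuousLinearMap.proj (1 : Fin 3)).comp (LinearMap.toContinuousLinearMap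
      (Matrix.toLin' (opioidJacobian α β ε δ μ μs ζ σ))) =
      (0:ℝ) • (0 - opioidProj 0 - opioidProj 1 - opioidProj 2) + σ • opioidProj 2 +
            ((β * (1 - 0) * p 0) • opioidProj 1 + p 1 • (β * (1 - 0)) • opioidProj 0) +
          ((β * 0 * p 0) • (0 - opioidProj 0 - opioidProj 1 - opioidProj 2) +
            (1 - p 0 - p 1 - p 2) • (β * 0) • opioidProj 0) +
        ((ν * p 2) • opioidProj 1 + p 1 • ν • opioidProj 2) -
      (ζ + μs) • opioidProj 1 := by
    ext v
    simp [opioidJacobian, Matrix.toLin'_apply, Matrix.mulVec, dotProduct,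
      Fin.sum_univ_three, hp, Matrix.vecHead, Matrix.vecTail]
    field_simp
    ring
  have key2 : (ContinuousLinearMap.proj (2 : Fin 3)).comp (LinearMap.toContinuousLinearMap
      (Matrix.toLin' (opioidJacobian α β ε δ μ μs ζ σ))) =
      ζ • opioidProj 1 - ((μ * p 2) • opioidProj 1 + p 1 • μ • opioidProj 2) -
        (δ + σ + μ) • opioidProj 2 := by
    ext v
    simp [opioidJacobian, Matrix.toLin'_apply, Matrix.mulVec, dotProduct,
      Fin.sum_univ_three, hp, Matrix.vecHead, Matrix.vecTail]
    ring
  apply hasFDerivAt_pi''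
  intro i
  fin_cases i
  · exact h0.congr_fderiv key0.symm
  · exact h1.congr_fderiv key1.symm
  · exact h2.congr_fderiv key2.symm
end

section
/- Assume α + ε + μ > 0, δ + σ + μ > 0, β(ε+μ)/(α+ε+μ) < ζ + μ*, and (ζ + μ* - β(ε+μ)/(α+ε+μ))·(δ+σ+μ) > σ·ζ. Then every root in ℂ of the characteristic polynomial of J has strictly negative real part; that is, the addiction-free equilibrium of the linearized prescription opioid epidemic model is (spectrally) asymptotically stable. -/
open Matrix Polynomial

lemma aeval_charpoly_fin3 (M : Matrix (Fin 3) (Fin 3) ℝ) (z : ℂ) :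
    aeval z M.charpoly =
      (z - M 0 0)*((z - M 1 1)*(z - M 2 2) - M 1 2 * M 2 1)
      - (-(M 0 1 : ℂ))*((-(M 1 0):ℂ)*(z - M 2 2) - (-(M 1 2):ℂ) * (-(M 2 0):ℂ))
      + (-(M 0 2 : ℂ))*((-(M 1 0):ℂ)*(-(M 2 1):ℂ) - (z - M 1 1)*(-(M 2 0):ℂ)) := by
  rw [Matrix.charpoly, Matrix.det_fin_three]
  simp [charmatrix_apply, Matrix.one_apply]
  ring

lemma opioid_charpoly_factor (α β ε δ μ μs ζ σ : ℝ) (z : ℂ) :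
    aeval z (opioidJacobian α β ε δ μ μs ζ σ).charpoly =
      (z + (α + ε + μ : ℝ)) *
        ((z - ((β * (ε + μ) / (α + ε + μ) - (ζ + μs) : ℝ) : ℂ)) * (z + ((δ + σ + μ : ℝ) : ℂ))
          - (σ : ℂ) * (ζ : ℂ)) := by
  rw [aeval_charpoly_fin3]
  have e00 : opioidJacobian α β ε δ μ μs ζ σ 0 0 = -(α + ε + μ) := rfl
  have e11 : opioidJacobian α β ε δ μ μs ζ σ 1 1 = β * (ε + μ) / (α + ε + μ) - (ζ + μs) := rfl
  have e22 : opioidJacobian α β ε δ μ μs ζ σ 2 2 = -(δ + σ + μ) := rfl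
  have e12 : opioidJacobian α β ε δ μ μs ζ σ 1 2 = σ := rfl
  have e21 : opioidJacobian α β ε δ μ μs ζ σ 2 1 = ζ := rfl
  have e10 : opioidJacobian α β ε δ μ μs ζ σ 1 0 = 0 := rfl
  have e20 : opioidJacobian α β ε δ μ μs ζ σ 2 0 = 0 := rfl
  rw [e00, e11, e22, e12, e21, e10, e20]
  push_cast
  ring

/-- under `α + ε + μ > 0`, `δ + σ + μ > 0`,
`β(ε+μ)/(α+ε+μ) < ζ + μ*` and `(ζ + μ* - β(ε+μ)/(α+ε+μ))·(δ+σ+μ) > σ·ζ`,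
every complex root of the characteristic polynomial of the Jacobian `J` has strictly
negative real part, i.e. the addiction-free equilibrium of the linearized model is
(spectrally) asymptotically stable. -/
theorem addiction_free_equilibrium_stable (α β ε δ μ μs ζ σ : ℝ)
    (h1 : 0 < α + ε + μ) (h2 : 0 < δ + σ + μ)
    (h3 : β * (ε + μ) / (α + ε + μ) < ζ + μs)
    (h4 : σ * ζ < (ζ + μs - β * (ε + μ) / (α + ε + μ)) * (δ + σ + μ)) :
    ∀ z : ℂ, aeval z (opioidJacobian α β ε δ μ μs ζ σ).charpoly = 0 → z.re < 0 := by
  intro z hz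
  rw [opioid_charpoly_factor] at hz
  set a : ℝ := β * (ε + μ) / (α + ε + μ) - (ζ + μs) with ha
  have haneg : a < 0 := by simp [ha]; linarith
  set s : ℝ := δ + σ + μ
  have hprod : σ * ζ < (-a) * s := by
    have : ζ + μs - β * (ε + μ) / (α + ε + μ) = -a := by rw [ha]; ring
    rw [← this]; exact h4
  rcases mul_eq_zero.mp hz with h | h
  · have : z = -((α + ε + μ : ℝ) : ℂ) := by linear_combination h
    rw [this]
    simp
    linarith
  · -- quadratic case
    have hre := congrArg Complex.re h
    have him := congrArg Complex.im h
    simp [Complex.mul_re, Complex.mul_im, Complex.sub_re, Complex.sub_im,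
      Complex.add_re, Complex.add_im, Complex.ofReal_re, Complex.ofReal_im] at hre him
    rcases eq_or_ne z.im 0 with hy | hy
    · rw [hy] at hre
      by_contra hx
      push_neg at hx
      nlinarith [hre, hprod, mul_nonneg hx (le_of_lt h2)]
    · have hfac : z.im * (2 * z.re - a + s) = 0 := by linear_combination him
      rcases mul_eq_zero.mp hfac with h' | h'
      · exact absurd h' hy
      · linarith
end

section
/- Let A ∈ ℝ^{3×3}, B̃ ∈ ℝ^{3×2}, γ̃ > 0, let P ∈ ℝ^{3×3} be symmetric satisfying AᵀP + PA + I - (1/γ̃)·P B̃ B̃ᵀ P = 0, and set K = -(1/γ̃)·B̃ᵀP. Let x : ℝ → ℝ³ be differentiable with x'(t) = (A + B̃K)·x(t) for all t ≥ 0. Then for every c ≥ 0, the sublevel set {y ∈ ℝ³ : yᵀPy ≤ c} is forward invariant: if x(0)ᵀPx(0) ≤ c, then x(t)ᵀPx(t) ≤ c for all t ≥ 0. -/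
open Matrix

lemma quad_hasDerivAt (P : Matrix (Fin 3) (Fin 3) ℝ) (x : ℝ → Fin 3 → ℝ)
    (v : Fin 3 → ℝ) (t : ℝ) (h : HasDerivAt x v t) :
    HasDerivAt (fun s => x s ⬝ᵥ P.mulVec (x s))
      (v ⬝ᵥ P.mulVec (x t) + x t ⬝ᵥ P.mulVec v) t := by
  have hcoord : ∀ i, HasDerivAt (fun s => x s i) (v i) t := fun i =>
    (hasDerivAt_pi.mp h) i
  have inner : ∀ i, HasDerivAt (fun s => ∑ j, P i j * x s j) (∑ j, P i j * v j) t :=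
    fun i => HasDerivAt.fun_sum fun j _ => (hcoord j).const_mul (P i j)
  have total : HasDerivAt (fun s => ∑ i, x s i * ∑ j, P i j * x s j)
      (∑ i, (v i * ∑ j, P i j * x t j + x t i * ∑ j, P i j * v j)) t :=
    HasDerivAt.fun_sum fun i _ => (hcoord i).mul (inner i)
  convert total using 1 <;>
  · simp [dotProduct, mulVec, Finset.sum_add_distrib]

/-- let `P = Pᵀ` solve the Riccati equation
`AᵀP + PA + I - (1/γ̃)·P B̃ B̃ᵀ P = 0` with `γ̃ > 0`, `K = -(1/γ̃)·B̃ᵀP`, and let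
`x : ℝ → ℝ³` be differentiable with `x' = (A + B̃K) x` for all `t ≥ 0`. Then for every
`c ≥ 0` the sublevel set `{y : yᵀPy ≤ c}` of the quadratic form is forward invariant
along `x`: if `x(0)ᵀPx(0) ≤ c` then `x(t)ᵀPx(t) ≤ c` for all `t ≥ 0`. -/
theorem riccati_sublevel_forward_invariant (A P : Matrix (Fin 3) (Fin 3) ℝ)
    (B : Matrix (Fin 3) (Fin 2) ℝ) (γ : ℝ) (hγ : 0 < γ)
    (hP : Pᵀ = P)
    (hric : Aᵀ * P + P * A + 1 - (1 / γ) • (P * B * Bᵀ * P) = 0)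
    (x : ℝ → Fin 3 → ℝ) (hdiff : Differentiable ℝ x)
    (hx : ∀ t : ℝ, 0 ≤ t →
      HasDerivAt x ((A + B * (-(1 / γ) • (Bᵀ * P))).mulVec (x t)) t) :
    ∀ c : ℝ, 0 ≤ c → x 0 ⬝ᵥ P.mulVec (x 0) ≤ c →
      ∀ t : ℝ, 0 ≤ t → x t ⬝ᵥ P.mulVec (x t) ≤ c := by
  intro c _ h0 t ht
  set M : Matrix (Fin 3) (Fin 3) ℝ := A + B * (-(1 / γ) • (Bᵀ * P)) with hM
  set f : ℝ → ℝ := fun s => x s ⬝ᵥ P.mulVec (x s) with hf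
  have hsq : ∀ {n : ℕ} (v : Fin n → ℝ), (0:ℝ) ≤ v ⬝ᵥ v := fun v =>
    Finset.sum_nonneg fun i _ => mul_self_nonneg _
  -- key matrix identity
  have h1 : Aᵀ * P + P * A = (1 / γ) • (P * B * Bᵀ * P) - 1 := by
    rw [sub_eq_zero] at hric
    exact eq_sub_of_add_eq hric
  have hMt : Mᵀ = Aᵀ - (1 / γ) • (P * B * Bᵀ) := by
    rw [hM, transpose_add, transpose_mul, transpose_smul, transpose_mul, hP,
      transpose_transpose]
    rw [neg_smul, Matrix.neg_mul, Matrix.smul_mul, sub_eq_add_neg, Matrix.mul_assoc]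
  have hMe : M = A - (1 / γ) • (B * (Bᵀ * P)) := by
    rw [hM, neg_smul, Matrix.mul_neg, Matrix.mul_smul, sub_eq_add_neg]
  have hkey : Mᵀ * P + P * M = -(1 : Matrix (Fin 3) (Fin 3) ℝ)
      - (1 / γ) • (P * B * Bᵀ * P) := by
    rw [hMt, hMe, Matrix.sub_mul, Matrix.mul_sub, Matrix.smul_mul, Matrix.mul_smul]
    have e1 : P * B * Bᵀ * P = P * (B * (Bᵀ * P)) := by
      rw [Matrix.mul_assoc, Matrix.mul_assoc]
    rw [← e1, sub_add_sub_comm, h1]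
    abel
  -- derivative is nonpositive for s ≥ 0
  have hderiv : ∀ s : ℝ, 0 ≤ s → HasDerivAt f
      (x s ⬝ᵥ (Mᵀ * P + P * M).mulVec (x s)) s := by
    intro s hs
    have := quad_hasDerivAt P x (M.mulVec (x s)) s (hx s hs)
    convert this using 1
    rw [Matrix.add_mulVec, dotProduct_add]
    congr 1
    · rw [← mulVec_mulVec, dotProduct_mulVec, vecMul_transpose]
    · rw [← mulVec_mulVec]
  have hnonpos : ∀ s : ℝ, 0 ≤ s → x s ⬝ᵥ (Mᵀ * P + P * M).mulVec (x s) ≤ 0 := by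
    intro s _
    rw [hkey]
    have e1 : x s ⬝ᵥ (-(1 : Matrix (Fin 3) (Fin 3) ℝ)
        - (1 / γ) • (P * B * Bᵀ * P)).mulVec (x s)
        = -(x s ⬝ᵥ x s) - (1 / γ) * (((Bᵀ * P).mulVec (x s)) ⬝ᵥ ((Bᵀ * P).mulVec (x s))) := by
      rw [sub_mulVec, dotProduct_sub, neg_mulVec, one_mulVec, dotProduct_neg,
        smul_mulVec, dotProduct_smul]
      congr 2
      rw [show P * B * Bᵀ * P = (P * B) * (Bᵀ * P) by rw [Matrix.mul_assoc],
        ← mulVec_mulVec, dotProduct_mulVec, ← mulVec_transpose, transpose_mul, hP]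
    rw [e1]
    have h2 := hsq (x s)
    have h3 := hsq ((Bᵀ * P).mulVec (x s))
    have h4 : (0:ℝ) ≤ 1 / γ := by positivity
    nlinarith
  -- monotonicity
  have hcont : Continuous f := by
    rw [hf]
    simp only [dotProduct, mulVec]
    have hxc : Continuous x := hdiff.continuous
    exact continuous_finset_sum _ fun i _ =>
      ((continuous_apply i).comp hxc).mul
        (continuous_finset_sum _ fun j _ =>
          continuous_const.mul ((continuous_apply j).comp hxc))
  have hmono : AntitoneOn f (Set.Ici (0:ℝ)) := by
    apply antitoneOn_of_deriv_nonpos (convex_Ici 0) hcont.continuousOn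
    · intro s hs
      rw [interior_Ici] at hs
      exact (hderiv s (le_of_lt hs)).differentiableAt.differentiableWithinAt
    · intro s hs
      rw [interior_Ici] at hs
      rw [(hderiv s (le_of_lt hs)).deriv]
      exact hnonpos s (le_of_lt hs)
  exact le_trans (hmono (Set.self_mem_Ici) (Set.mem_Ici.mpr ht) ht) h0
end

section
/- Let A = J and let B̃ be the 3×2 real matrix with rows (b₁, 0), (0, 0), (0, b₂). If b₁ ≠ 0, b₂ ≠ 0 and σ ≠ 0, then the pair (A, B̃) is controllable: the 3×6 controllability matrix [ B̃ | A·B̃ | A²·B̃ ] has rank 3. -/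
open Matrix

/-- The 3×6 controllability matrix of a pair `(A, B̃)`, with column blocks
`B̃`, `A·B̃`, `A²·B̃` (columns indexed by `Fin 3 × Fin 2`). -/
noncomputable def ctrbMatrix (A : Matrix (Fin 3) (Fin 3) ℝ)
    (B : Matrix (Fin 3) (Fin 2) ℝ) : Matrix (Fin 3) (Fin 3 × Fin 2) ℝ :=
  fun i p => (A ^ (p.1 : ℕ) * B) i p.2

lemma rank_cols_le (M : Matrix (Fin 3) (Fin 3 × Fin 2) ℝ) (g : Fin 3 → Fin 3 × Fin 2) :
    (M.submatrix id g).rank ≤ M.rank := by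
  rw [rank_eq_finrank_span_cols, rank_eq_finrank_span_cols]
  apply Submodule.finrank_mono
  apply Submodule.span_mono
  rintro _ ⟨j, rfl⟩
  exact ⟨g j, rfl⟩

/-- with `A = J` and `B̃` the 3×2 matrix with rows `(b₁,0), (0,0), (0,b₂)`,
if `b₁ ≠ 0`, `b₂ ≠ 0` and `σ ≠ 0`, then the pair `(A, B̃)` is controllable: the
controllability matrix `[B̃ | A·B̃ | A²·B̃]` has rank 3. -/
theorem opioid_pair_controllable (α β ε δ μ μs ζ σ b₁ b₂ : ℝ)
    (h : α + ε + μ ≠ 0) (hb₁ : b₁ ≠ 0) (hb₂ : b₂ ≠ 0) (hσ : σ ≠ 0) :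
    (ctrbMatrix (opioidJacobian α β ε δ μ μs ζ σ)
      !![b₁, 0; 0, 0; 0, b₂]).rank = 3 := by
  set M := ctrbMatrix (opioidJacobian α β ε δ μ μs ζ σ) !![b₁, 0; 0, 0; 0, b₂] with hM
  have hub : M.rank ≤ 3 := by simpa using M.rank_le_card_height
  have hN : M.submatrix id ![(0,0),(0,1),(1,1)] =
      !![b₁, 0, (δ - ε) * b₂; 0, 0, σ * b₂; 0, b₂, -(δ + σ + μ) * b₂] := by
    ext i j
    fin_cases i <;> fin_cases j <;>
      simp [hM, ctrbMatrix, opioidJacobian, Matrix.mul_apply, Fin.sum_univ_three]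
  have hdet : IsUnit (!![b₁, 0, (δ - ε) * b₂; 0, 0, σ * b₂; 0, b₂, -(δ + σ + μ) * b₂]).det := by
    have : (!![b₁, 0, (δ - ε) * b₂; 0, 0, σ * b₂; 0, b₂, -(δ + σ + μ) * b₂]).det
        = -(b₁ * σ * b₂ * b₂) := by
      norm_num [Matrix.det_fin_three]
      exact (by simp only [Matrix.cons_val_two, Matrix.tail_cons, Matrix.head_cons, Matrix.vecHead, Matrix.cons_val_zero]; ring)
    rw [this]
    exact (IsUnit.mul (IsUnit.mul (hb₁.isUnit.mul hσ.isUnit) hb₂.isUnit) hb₂.isUnit).neg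
  have hlb : 3 ≤ M.rank := by
    have := rank_cols_le M ![(0,0),(0,1),(1,1)]
    rw [hN, Matrix.rank_of_isUnit _ ((Matrix.isUnit_iff_isUnit_det _).mpr hdet)] at this
    simpa using this
  omega
end
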